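/- Let n ≥ 1 and s ≥ 1 be natural numbers, and let R and Σ be s×s real matrices with Σ invertible. Then det(J_n ⊗ R + I_n ⊗ Σ) = det(I_s + n·Σ⁻¹·R) · det(Σ)^n. -/

import Mathlib

open Matrix
open scoped Kronecker

theorem stmt5 (n s : ℕ) (hn : 1 ≤ n) (hs : 1 ≤ s)
    (R Sig : Matrix (Fin s) (Fin s) ℝ) (hSig : IsUnit Sig.det) :
    ((Matrix.of fun _ _ => (1 : ℝ) : Matrix (Fin n) (Fin n) ℝ) ⊗ₖ R
        + (1 : Matrix (Fin n) (Fin n) ℝ) ⊗ₖ Sig).det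
      = ((1 : Matrix (Fin s) (Fin s) ℝ) + (n : ℝ) • (Sig⁻¹ * R)).det * Sig.det ^ n := by
  set J : Matrix (Fin n) (Fin n) ℝ := Matrix.of fun _ _ => (1 : ℝ) with hJ
  set M : Matrix (Fin s) (Fin s) ℝ := Sig⁻¹ * R with hM
  have hfact : J ⊗ₖ R + (1 : Matrix (Fin n) (Fin n) ℝ) ⊗ₖ Sig
      = ((1 : Matrix (Fin n) (Fin n) ℝ) ⊗ₖ Sig) * (1 + J ⊗ₖ M) := by
    rw [mul_add, mul_one, ← Matrix.mul_kronecker_mul, one_mul,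
      Matrix.mul_nonsing_inv_cancel_left _ _ hSig, add_comm]
  rw [hfact, Matrix.det_mul, Matrix.det_kronecker, Matrix.det_one, one_pow, one_mul]
  have key : ((1 : Matrix (Fin n × Fin s) (Fin n × Fin s) ℝ) + J ⊗ₖ M).det
      = ((1 : Matrix (Fin s) (Fin s) ℝ) + (n : ℝ) • M).det := by
    set A : Matrix (Fin n × Fin s) (Fin s) ℝ := fun p b => M p.2 b with hA
    set B : Matrix (Fin s) (Fin n × Fin s) ℝ :=
      fun a p => if a = p.2 then 1 else 0 with hB
    have hAB : J ⊗ₖ M = A * B := by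
      ext ⟨i, a⟩ ⟨j, b⟩
      rw [Matrix.mul_apply]
      simp [Matrix.mul_apply, hA, hB, Matrix.kroneckerMap_apply, hJ]
    have hBA : B * A = (n : ℝ) • M := by
      ext a b
      rw [Matrix.mul_apply]
      simp [Matrix.mul_apply, hA, hB, Fintype.sum_prod_type, Finset.sum_ite_eq',
        Finset.mul_sum, mul_comm]
    rw [hAB, Matrix.det_one_add_mul_comm, hBA]
  rw [key, Fintype.card_fin, mul_comm]
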